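/- The generalized two-sided field of values G(A) of a diagonalizable matrix A is a compact and convex subset of ℂ. -/

import Mathlib

open Matrix

/-- The generalized two-sided field of values of `A`, relative to the
eigenvector matrix `V`. -/
def G {n : ℕ} (V A : Matrix (Fin n) (Fin n) ℂ) : Set ℂ :=
  {c | ∃ x y : Fin n → ℂ, y = (V * Vᴴ)⁻¹ *ᵥ x ∧ star y ⬝ᵥ x = 1 ∧
    c = star y ⬝ᵥ (A *ᵥ x)}

lemma key_lemma {n : ℕ} (V C : Matrix (Fin n) (Fin n) ℂ) (hV : IsUnit V.det)
    (u : Fin n → ℂ) :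
    star ((V * Vᴴ)⁻¹ *ᵥ (V *ᵥ u)) ⬝ᵥ ((V * C * V⁻¹) *ᵥ (V *ᵥ u)) =
      star u ⬝ᵥ (C *ᵥ u) := by
  have h1 : (V * Vᴴ)⁻¹ *ᵥ (V *ᵥ u) = Vᴴ⁻¹ *ᵥ u := by
    rw [Matrix.mul_inv_rev, mulVec_mulVec, Matrix.mul_assoc,
      Matrix.nonsing_inv_mul _ hV, Matrix.mul_one]
  have h2 : (V * C * V⁻¹) *ᵥ (V *ᵥ u) = (V * C) *ᵥ u := by
    rw [mulVec_mulVec, Matrix.mul_assoc, Matrix.nonsing_inv_mul _ hV, Matrix.mul_one]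
  rw [h1, h2, star_mulVec, Matrix.conjTranspose_nonsing_inv, conjTranspose_conjTranspose]
  rw [← dotProduct_mulVec, mulVec_mulVec, ← Matrix.mul_assoc,
    Matrix.nonsing_inv_mul _ hV, Matrix.one_mul]

theorem stmt10 {n : ℕ} (V A : Matrix (Fin n) (Fin n) ℂ) (d : Fin n → ℂ)
    (hV : IsUnit V.det) (hA : A = V * Matrix.diagonal d * V⁻¹) :
    IsCompact (G V A) ∧ Convex ℝ (G V A) := by
  classical
  set f : (Fin n → ℝ) →ₗ[ℝ] ℂ :=
    { toFun := fun w => ∑ i, w i • d i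
      map_add' := by
        intro a b
        simp [add_smul, Finset.sum_add_distrib]
      map_smul' := by
        intro r a
        simp [smul_smul, Finset.mul_sum, mul_assoc] } with hf
  have hG : G V A = f '' stdSimplex ℝ (Fin n) := by
    ext c
    constructor
    · rintro ⟨x, y, hy, hyx, hc⟩
      set u : Fin n → ℂ := V⁻¹ *ᵥ x with hu
      have hxu : x = V *ᵥ u := by
        rw [hu, mulVec_mulVec, Matrix.mul_nonsing_inv _ hV, one_mulVec]
      have h1 : star y ⬝ᵥ x = star u ⬝ᵥ u := by
        rw [hy, hxu]
        have := key_lemma V 1 hV u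
        rwa [Matrix.mul_one, Matrix.mul_nonsing_inv _ hV, one_mulVec, one_mulVec] at this
      have h2 : star y ⬝ᵥ (A *ᵥ x) = star u ⬝ᵥ (Matrix.diagonal d *ᵥ u) := by
        rw [hy, hxu, hA]
        exact key_lemma V (Matrix.diagonal d) hV u
      refine ⟨fun i => Complex.normSq (u i), ?_, ?_⟩
      · constructor
        · intro i
          exact Complex.normSq_nonneg _
        · have : star u ⬝ᵥ u = 1 := h1 ▸ hyx
          have h3 : (↑(∑ i, Complex.normSq (u i)) : ℂ) = 1 := by
            rw [Complex.ofReal_sum]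
            rw [dotProduct] at this
            rw [← this]
            congr 1
            ext i
            simp [Pi.star_apply, Complex.star_def, ← Complex.normSq_eq_conj_mul_self]
          exact_mod_cast h3
      · rw [hc, h2, hf]
        simp only [LinearMap.coe_mk, AddHom.coe_mk]
        rw [dotProduct]
        congr 1
        ext i
        rw [mulVec_diagonal]
        simp only [Pi.star_apply, Complex.star_def]
        rw [Complex.real_smul]
        rw [show (starRingEnd ℂ) (u i) * (d i * u i) = d i * ((starRingEnd ℂ) (u i) * u i) by ring,
          ← Complex.normSq_eq_conj_mul_self]
        ring
    · rintro ⟨w, ⟨hw0, hw1⟩, hc⟩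
      set u : Fin n → ℂ := fun i => (Real.sqrt (w i) : ℂ) with hu
      have husq : ∀ i, star (u i) * u i = (w i : ℂ) := by
        intro i
        simp only [hu, Complex.star_def, Complex.conj_ofReal]
        rw [← Complex.ofReal_mul, Real.mul_self_sqrt (hw0 i)]
      refine ⟨V *ᵥ u, (V * Vᴴ)⁻¹ *ᵥ (V *ᵥ u), rfl, ?_, ?_⟩
      · have := key_lemma V 1 hV u
        rw [Matrix.mul_one, Matrix.mul_nonsing_inv _ hV, one_mulVec, one_mulVec] at this
        rw [this, dotProduct]
        calc ∑ i, star u i * u i = ∑ i, (w i : ℂ) := by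
              exact Finset.sum_congr rfl fun i _ => by rw [Pi.star_apply, husq i]
          _ = ((∑ i, w i : ℝ) : ℂ) := by rw [Complex.ofReal_sum]
          _ = 1 := by rw [hw1]; norm_num
      · rw [hA, key_lemma V (Matrix.diagonal d) hV u, ← hc, hf]
        simp only [LinearMap.coe_mk, AddHom.coe_mk]
        rw [dotProduct]
        refine Finset.sum_congr rfl fun i _ => ?_
        rw [mulVec_diagonal, Complex.real_smul]
        rw [Pi.star_apply,
          show star (u i) * (d i * u i) = d i * (star (u i) * u i) by ring, husq i]
        ring
  rw [hG]
  constructor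
  · exact (isCompact_stdSimplex ℝ (Fin n)).image f.continuous_of_finiteDimensional
  · exact (convex_stdSimplex ℝ (Fin n)).linear_image f
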